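/- For every integer m ≥ 0, every t ≥ 0, and any two nonnegative rate vectors λ = (λ_1,…,λ_k) and μ = (μ_1,…,μ_k), one has Σ_{l=0}^{m} p(λ; l, t) · p(μ; m−l, t) = p(λ+μ; m, t), where λ+μ = (λ_1+μ_1,…,λ_k+μ_k). In other words, the sum of two independent GCPs with rates λ and μ is distributed as a GCP with rates λ_j + μ_j (different numbers of jump kinds k_1 < k_2 are covered by setting the extra rates equal to zero). -/

import Mathlib

open Finset

/-- The set `Ω(k, n)` of tuples `x : Fin k → ℕ` with `∑_{j=1}^k j * x_j = n`
(`j : Fin k` represents the jump size `j + 1`). -/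
def gcpOmega (k n : ℕ) : Finset (Fin k → ℕ) :=
  (Fintype.piFinset fun _ : Fin k => Finset.range (n + 1)).filter
    fun x => ∑ j : Fin k, (j.1 + 1) * x j = n

/-- The probability mass function of the generalized counting process with jump
rates `lam j` for jumps of size `j + 1`, evaluated at state `n` and time `t`. -/
noncomputable def gcpPMF (k : ℕ) (lam : Fin k → ℝ) (n : ℕ) (t : ℝ) : ℝ :=
  ∑ x ∈ gcpOmega k n,
    ∏ j : Fin k, (lam j * t) ^ (x j) / (Nat.factorial (x j)) * Real.exp (-(lam j * t))

lemma mem_gcpOmega {k n : ℕ} {x : Fin k → ℕ} :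
    x ∈ gcpOmega k n ↔ ∑ j : Fin k, (j.1 + 1) * x j = n := by
  unfold gcpOmega
  simp only [mem_filter, Fintype.mem_piFinset, mem_range]
  constructor
  · exact fun h => h.2
  · intro h
    refine ⟨fun j => ?_, h⟩
    have h1 : x j ≤ (j.1 + 1) * x j := Nat.le_mul_of_pos_left _ (Nat.succ_pos _)
    have h2 : (j.1 + 1) * x j ≤ ∑ i : Fin k, (i.1 + 1) * x i :=
      Finset.single_le_sum (f := fun i : Fin k => (i.1 + 1) * x i)
        (fun i _ => Nat.zero_le _) (mem_univ j)
    omega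

lemma pow_div_factorial_add (a b : ℝ) (z : ℕ) :
    (a + b) ^ z / (Nat.factorial z) =
      ∑ p ∈ Finset.HasAntidiagonal.antidiagonal z,
        a ^ p.1 / (Nat.factorial p.1) * (b ^ p.2 / (Nat.factorial p.2)) := by
  rw [Commute.add_pow' (Commute.all a b), Finset.sum_div]
  refine Finset.sum_congr rfl fun p hp => ?_
  obtain ⟨i, j⟩ := p
  rw [Finset.HasAntidiagonal.mem_antidiagonal] at hp
  subst hp
  have hfac : ∀ n : ℕ, (Nat.factorial n : ℝ) ≠ 0 :=
    fun n => Nat.cast_ne_zero.2 (Nat.factorial_ne_zero n)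
  rw [nsmul_eq_mul, Nat.cast_add_choose]
  field_simp

theorem merging_of_two_gcps (k : ℕ) (hk : 1 ≤ k) (lam mu : Fin k → ℝ)
    (hlam : ∀ j, 0 ≤ lam j) (hmu : ∀ j, 0 ≤ mu j) (t : ℝ) (ht : 0 ≤ t) (m : ℕ) :
    ∑ l ∈ Finset.range (m + 1), gcpPMF k lam l t * gcpPMF k mu (m - l) t
      = gcpPMF k (fun j => lam j + mu j) m t := by
  unfold gcpPMF
  -- rewrite the RHS term as a sum over antidiagonal decompositions
  have hterm : ∀ z : Fin k → ℕ,
      (∏ j : Fin k, ((lam j + mu j) * t) ^ (z j) / (Nat.factorial (z j)) *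
          Real.exp (-((lam j + mu j) * t)))
        = ∑ w ∈ Fintype.piFinset (fun j => Finset.HasAntidiagonal.antidiagonal (z j)),
            ∏ j : Fin k,
              ((lam j * t) ^ ((w j).1) / (Nat.factorial ((w j).1)) *
                  Real.exp (-(lam j * t)) *
                ((mu j * t) ^ ((w j).2) / (Nat.factorial ((w j).2)) *
                  Real.exp (-(mu j * t)))) := by
    intro z
    rw [← Finset.prod_univ_sum (fun j => Finset.HasAntidiagonal.antidiagonal (z j))
          (fun j p => (lam j * t) ^ p.1 / (Nat.factorial p.1) * Real.exp (-(lam j * t)) *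
            ((mu j * t) ^ p.2 / (Nat.factorial p.2) * Real.exp (-(mu j * t))))]
    refine Finset.prod_congr rfl fun j _ => ?_
    have h1 : (lam j + mu j) * t = lam j * t + mu j * t := by ring
    rw [h1, pow_div_factorial_add, Finset.sum_mul]
    refine Finset.sum_congr rfl fun p _ => ?_
    rw [neg_add, Real.exp_add]
    ring
  rw [Finset.sum_congr rfl fun z _ => hterm z]
  -- rewrite the LHS as a double sum of products
  have hlhs : ∀ l : ℕ,
      (∑ x ∈ gcpOmega k l,
          ∏ j : Fin k, (lam j * t) ^ (x j) / (Nat.factorial (x j)) *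
            Real.exp (-(lam j * t))) *
        (∑ y ∈ gcpOmega k (m - l),
          ∏ j : Fin k, (mu j * t) ^ (y j) / (Nat.factorial (y j)) *
            Real.exp (-(mu j * t)))
      = ∑ x ∈ gcpOmega k l, ∑ y ∈ gcpOmega k (m - l),
          ∏ j : Fin k,
            ((lam j * t) ^ (x j) / (Nat.factorial (x j)) * Real.exp (-(lam j * t)) *
              ((mu j * t) ^ (y j) / (Nat.factorial (y j)) * Real.exp (-(mu j * t)))) := by
    intro l
    rw [Finset.sum_mul_sum]
    exact Finset.sum_congr rfl fun x _ => Finset.sum_congr rfl fun y _ =>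
      (Finset.prod_mul_distrib).symm
  rw [Finset.sum_congr rfl fun l _ => hlhs l]
  rw [Finset.sum_congr rfl fun l _ =>
    (Finset.sum_product' (s := gcpOmega k l) (t := gcpOmega k (m - l))
      (f := fun x y => ∏ j : Fin k,
        ((lam j * t) ^ (x j) / (Nat.factorial (x j)) * Real.exp (-(lam j * t)) *
          ((mu j * t) ^ (y j) / (Nat.factorial (y j)) * Real.exp (-(mu j * t)))))).symm]
  -- turn both sides into sums over sigma types
  rw [Finset.sum_sigma' (Finset.range (m + 1))
        (fun l => gcpOmega k l ×ˢ gcpOmega k (m - l))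
        (fun _ p => ∏ j : Fin k,
          ((lam j * t) ^ (p.1 j) / (Nat.factorial (p.1 j)) * Real.exp (-(lam j * t)) *
            ((mu j * t) ^ (p.2 j) / (Nat.factorial (p.2 j)) * Real.exp (-(mu j * t)))))]
  rw [Finset.sum_sigma' (gcpOmega k m)
        (fun z => Fintype.piFinset (fun j => Finset.HasAntidiagonal.antidiagonal (z j)))
        (fun _ w => ∏ j : Fin k,
          ((lam j * t) ^ ((w j).1) / (Nat.factorial ((w j).1)) * Real.exp (-(lam j * t)) *
            ((mu j * t) ^ ((w j).2) / (Nat.factorial ((w j).2)) * Real.exp (-(mu j * t)))))]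
  refine Finset.sum_nbij'
    (fun p => ⟨fun j => p.2.1 j + p.2.2 j, fun j => (p.2.1 j, p.2.2 j)⟩)
    (fun q => ⟨∑ j : Fin k, (j.1 + 1) * (q.2 j).1,
      (fun j => (q.2 j).1, fun j => (q.2 j).2)⟩) ?_ ?_ ?_ ?_ ?_
  · rintro ⟨l, x, y⟩ hp
    simp only [Finset.mem_sigma, Finset.mem_range, Finset.mem_product] at hp
    obtain ⟨hl, hx, hy⟩ := hp
    rw [mem_gcpOmega] at hx hy
    simp only [Finset.mem_sigma, Fintype.mem_piFinset, Finset.HasAntidiagonal.mem_antidiagonal]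
    constructor
    · rw [mem_gcpOmega]
      simp only [Nat.mul_add, Finset.sum_add_distrib, hx, hy]
      omega
    · intro j; trivial
  · rintro ⟨z, w⟩ hq
    simp only [Finset.mem_sigma, Fintype.mem_piFinset, Finset.HasAntidiagonal.mem_antidiagonal] at hq
    obtain ⟨hz, hw⟩ := hq
    rw [mem_gcpOmega] at hz
    have hsum : (∑ j : Fin k, (j.1 + 1) * (w j).1) +
        (∑ j : Fin k, (j.1 + 1) * (w j).2) = m := by
      rw [← Finset.sum_add_distrib]
      rw [← hz]
      exact Finset.sum_congr rfl fun j _ => by rw [← Nat.mul_add, hw j]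
    simp only [Finset.mem_sigma, Finset.mem_range, Finset.mem_product]
    refine ⟨by omega, ?_, ?_⟩
    · rw [mem_gcpOmega]
    · rw [mem_gcpOmega]; omega
  · rintro ⟨l, x, y⟩ hp
    simp only [Finset.mem_sigma, Finset.mem_range, Finset.mem_product] at hp
    obtain ⟨hl, hx, hy⟩ := hp
    rw [mem_gcpOmega] at hx
    exact Sigma.ext hx HEq.rfl
  · rintro ⟨z, w⟩ hq
    simp only [Finset.mem_sigma, Fintype.mem_piFinset, Finset.HasAntidiagonal.mem_antidiagonal] at hq
    obtain ⟨hz, hw⟩ := hq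
    exact Sigma.ext (funext fun j => hw j) HEq.rfl
  · rintro ⟨l, x, y⟩ _
    rfl
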